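/- For every d ≥ 1, p ∈ ℕ, and c ∈ (0,1], there exists μ₀ > 0, depending only on d, p and c, with the following property: for every family of real coefficients (W_s), indexed by multi-indices s ∈ ℕ^d with |s| := s₁ + … + s_d ≤ p, satisfying Σ_{|s| ≤ p} W_s² = 1, and every Lebesgue-measurable set S contained in the closed Euclidean unit ball B of ℝ^d with λ(S) ≥ c·λ(B), one has ∫_S (Σ_{|s| ≤ p} W_s · u^s)² du ≥ μ₀, where u^s = u₁^{s₁} ⋯ u_d^{s_d} and λ denotes Lebesgue measure. -/

import Mathlib

open MeasureTheory

open MvPolynomial in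
lemma pmlb_zero_set_measure_zero : ∀ (n : ℕ) (P : MvPolynomial (Fin n) ℝ), P ≠ 0 →
    volume {u : Fin n → ℝ | eval u P = 0} = 0 := by
  intro n
  induction n with
  | zero =>
    intro P hP
    obtain ⟨a, rfl⟩ := C_surjective (Fin 0) P
    have ha : a ≠ 0 := fun h => hP (by simp [h])
    have h : {u : Fin 0 → ℝ | eval u (C a) = 0} = ∅ := by
      ext u; simp [ha]
    rw [h]; simp
  | succ n ih =>
    intro P hP
    set Q := finSuccEquiv ℝ n P with hQdef
    have hQ0 : Q ≠ 0 := by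
      simp only [hQdef, Ne, EmbeddingLike.map_eq_zero_iff]
      exact hP
    have hex : ∃ k, Q.coeff k ≠ 0 := by
      by_contra h; push_neg at h
      exact hQ0 (Polynomial.ext fun k => by simp [h k])
    obtain ⟨k₀, hk₀⟩ := hex
    set B : Set (ℝ × (Fin n → ℝ)) :=
      {z | Polynomial.eval z.1 (Q.map (eval z.2)) = 0} with hBdef
    have heval : ∀ z : ℝ × (Fin n → ℝ), Polynomial.eval z.1 (Q.map (eval z.2)) =
        ∑ k ∈ Finset.range (Q.natDegree + 1), eval z.2 (Q.coeff k) * z.1 ^ k := by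
      intro z
      rw [Polynomial.eval_eq_sum_range'
        (lt_of_le_of_lt (Polynomial.natDegree_map_le) (Nat.lt_succ_self _))]
      exact Finset.sum_congr rfl fun k _ => by rw [Polynomial.coeff_map]
    have hcontB : Continuous fun z : ℝ × (Fin n → ℝ) =>
        Polynomial.eval z.1 (Q.map (eval z.2)) := by
      simp only [heval]
      exact continuous_finset_sum _ fun k _ =>
        (((MvPolynomial.continuous_eval (p := Q.coeff k)).comp continuous_snd).mul
          ((continuous_fst).pow k))
    have hBmeas : MeasurableSet B :=
      hcontB.measurable (measurableSet_singleton (0:ℝ))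
    -- relate to pi volume
    have hMP := measurePreserving_piFinSuccAbove (fun _ : Fin (n+1) => (volume : Measure ℝ)) 0
    have hpre : (MeasurableEquiv.piFinSuccAbove (fun _ : Fin (n+1) => ℝ) 0) ⁻¹' B
        = {u : Fin (n+1) → ℝ | eval u P = 0} := by
      ext u
      have : (MeasurableEquiv.piFinSuccAbove (fun _ : Fin (n+1) => ℝ) 0) u
          = (u 0, Fin.tail u) := by
        simp [MeasurableEquiv.piFinSuccAbove, Fin.tail, Fin.succAbove]
      simp only [Set.mem_preimage, this, hBdef, Set.mem_setOf_eq]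
      rw [← eval_eq_eval_mv_eval', Fin.cons_self_tail]
    have hvol : volume {u : Fin (n+1) → ℝ | eval u P = 0}
        = ((volume : Measure ℝ).prod (volume : Measure (Fin n → ℝ))) B := by
      rw [← hpre]
      exact hMP.measure_preimage hBmeas.nullMeasurableSet
    rw [hvol]
    have hswap : ((volume : Measure ℝ).prod (volume : Measure (Fin n → ℝ))) B
        = ((volume : Measure (Fin n → ℝ)).prod (volume : Measure ℝ)) (Prod.swap ⁻¹' B) := by
      conv_lhs => rw [← Measure.prod_swap]
      rw [Measure.map_apply measurable_swap hBmeas]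
    rw [hswap]
    have hB'meas : MeasurableSet (Prod.swap ⁻¹' B : Set ((Fin n → ℝ) × ℝ)) :=
      hBmeas.preimage measurable_swap
    rw [Measure.measure_prod_null hB'meas]
    have hZ : volume {y : Fin n → ℝ | eval y (Q.coeff k₀) = 0} = 0 := ih _ hk₀
    have hae : ∀ᵐ y : Fin n → ℝ, y ∉ {y : Fin n → ℝ | eval y (Q.coeff k₀) = 0} := by
      rwa [← measure_eq_zero_iff_ae_notMem]
    filter_upwards [hae] with y hy
    have hmapne : Q.map (eval y) ≠ 0 := by
      intro h
      apply hy
      have : (Q.map (eval y)).coeff k₀ = 0 := by rw [h]; simp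
      rw [Polynomial.coeff_map] at this
      exact this
    have : (Prod.mk y ⁻¹' (Prod.swap ⁻¹' B) : Set ℝ)
        = {x : ℝ | (Q.map (eval y)).IsRoot x} := by
      ext x; simp [hBdef, Polynomial.IsRoot]
    show volume (Prod.mk y ⁻¹' (Prod.swap ⁻¹' B)) = 0
    rw [this]
    exact Set.Finite.measure_zero (Polynomial.finite_setOf_isRoot hmapne) _

open MvPolynomial
open scoped ENNReal


noncomputable def pmlbA (d p : ℕ) : Finset (Fin d →₀ ℕ) :=
  (Finset.Iic (Finsupp.equivFunOnFinite.symm fun _ : Fin d => p)).filter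
    (fun s => (s.sum fun _ e => e) ≤ p)

lemma mem_pmlbA {d p : ℕ} {s : Fin d →₀ ℕ} :
    s ∈ pmlbA d p ↔ (s.sum fun _ e => e) ≤ p := by
  constructor
  · intro h
    exact (Finset.mem_filter.mp h).2
  · intro h
    refine Finset.mem_filter.mpr ⟨Finset.mem_Iic.mpr ?_, h⟩
    intro i
    have h1 : s i ≤ s.sum fun _ e => e := by
      by_cases hi : s i = 0
      · simp [hi]
      · exact Finset.single_le_sum (f := fun i => s i) (fun _ _ => Nat.zero_le _)
          (Finsupp.mem_support_iff.mpr hi)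
    simpa using h1.trans h

lemma pmlbA_zero_mem {d p : ℕ} : (0 : Fin d →₀ ℕ) ∈ pmlbA d p :=
  mem_pmlbA.mpr (by simp)

noncomputable def pmlbF {d p : ℕ} (w : pmlbA d p → ℝ) (u : Fin d → ℝ) : ℝ :=
  ∑ s : pmlbA d p, w s * ∏ i, u i ^ (s.1 i)

lemma pmlbF_continuous {d p : ℕ} (w : pmlbA d p → ℝ) : Continuous (pmlbF w) :=
  continuous_finset_sum _ fun s _ => continuous_const.mul
    (continuous_finset_prod _ fun i _ => (continuous_apply i).pow _)

lemma pmlb_abs_le_one {d : ℕ} {u : Fin d → ℝ} (hu : ∑ i, u i ^ 2 ≤ 1) (i : Fin d) :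
    |u i| ≤ 1 := by
  rw [← sq_le_one_iff_abs_le_one]
  exact le_trans (Finset.single_le_sum (f := fun i => u i ^ 2)
    (fun j _ => sq_nonneg _) (Finset.mem_univ i)) hu

lemma pmlb_monomial_le_one {d : ℕ} {u : Fin d → ℝ} (hu : ∑ i, u i ^ 2 ≤ 1)
    (s : Fin d →₀ ℕ) : |∏ i, u i ^ s i| ≤ 1 := by
  rw [Finset.abs_prod]
  refine Finset.prod_le_one (fun i _ => abs_nonneg _) fun i _ => ?_
  rw [abs_pow]
  exact pow_le_one₀ (abs_nonneg _) (pmlb_abs_le_one hu i)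

lemma pmlbF_close {d p : ℕ} (w w' : pmlbA d p → ℝ) {u : Fin d → ℝ}
    (hu : ∑ i, u i ^ 2 ≤ 1) :
    |pmlbF w u - pmlbF w' u| ≤ ∑ s : pmlbA d p, |w s - w' s| := by
  rw [pmlbF, pmlbF, ← Finset.sum_sub_distrib]
  refine (Finset.abs_sum_le_sum_abs _ _).trans ?_
  refine Finset.sum_le_sum fun s _ => ?_
  rw [← sub_mul, abs_mul]
  calc |w s - w' s| * |∏ i, u i ^ (s.1 i)| ≤ |w s - w' s| * 1 :=
        mul_le_mul_of_nonneg_left (pmlb_monomial_le_one hu s.1) (abs_nonneg _)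
    _ = |w s - w' s| := mul_one _

-- the polynomial associated to w, and its zero set
lemma pmlbF_eq_eval {d p : ℕ} (w : pmlbA d p → ℝ) (u : Fin d → ℝ) :
    pmlbF w u = eval u (∑ s : pmlbA d p, monomial s.1 (w s)) := by
  rw [map_sum]
  refine Finset.sum_congr rfl fun s _ => ?_
  rw [eval_monomial, Finsupp.prod_pow]

lemma pmlb_poly_ne_zero {d p : ℕ} (w : pmlbA d p → ℝ) (hw : (∑ s, w s ^ 2) = 1) :
    (∑ s : pmlbA d p, monomial s.1 (w s)) ≠ 0 := by
  have hex : ∃ s : pmlbA d p, w s ≠ 0 := by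
    by_contra h; push_neg at h
    rw [Finset.sum_congr rfl (fun s _ => by rw [h s])] at hw
    simp at hw
  obtain ⟨s₀, hs₀⟩ := hex
  intro h0
  apply hs₀
  have := congrArg (coeff s₀.1) h0
  rwa [coeff_sum, Finset.sum_eq_single s₀
    (fun s _ hne => by
      rw [coeff_monomial, if_neg (fun he => hne (Subtype.ext he))])
    (fun h => absurd (Finset.mem_univ s₀) h), coeff_monomial, if_pos rfl,
    coeff_zero] at this

lemma pmlb_ball_volume_ne_top (d : ℕ) :
    volume {u : Fin d → ℝ | ∑ i, u i ^ 2 ≤ 1} ≠ ⊤ := by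
  have hsub : {u : Fin d → ℝ | ∑ i, u i ^ 2 ≤ 1} ⊆
      Set.pi Set.univ (fun _ : Fin d => Set.Icc (-1 : ℝ) 1) := by
    intro u hu i _
    exact abs_le.mp (pmlb_abs_le_one hu i)
  refine ((measure_mono hsub).trans_lt ?_).ne
  rw [volume_pi_pi]
  simp only [Real.volume_Icc]
  rw [Finset.prod_const]
  exact ENNReal.pow_lt_top ENNReal.ofReal_lt_top

lemma pmlb_key (d p : ℕ)
    (hzero : ∀ P : MvPolynomial (Fin d) ℝ, P ≠ 0 →
      volume {u : Fin d → ℝ | eval u P = 0} = 0)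
    (η : ℝ≥0∞) (hη : 0 < η) :
    ∃ t : ℝ, 0 < t ∧ ∀ w : {x // x ∈ pmlbA d p} → ℝ,
      (∑ s, w s ^ 2) = 1 →
      volume {u : Fin d → ℝ | (∑ i, u i ^ 2 ≤ 1) ∧ |pmlbF w u| ≤ t} ≤ η := by
  classical
  set K : Set ({x // x ∈ pmlbA d p} → ℝ) := {w | (∑ s, w s ^ 2) = 1} with hKdef
  -- each w in K admits a good threshold
  have hch : ∀ w : K, ∃ t : ℝ, 0 < t ∧
      volume {u : Fin d → ℝ | (∑ i, u i ^ 2 ≤ 1) ∧ |pmlbF w.1 u| ≤ 2 * t} < η := by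
    rintro ⟨w, hw⟩
    have hwK : (∑ s, w s ^ 2) = 1 := hw
    set sk : ℕ → Set (Fin d → ℝ) :=
      fun k => {u | (∑ i, u i ^ 2 ≤ 1) ∧ |pmlbF w u| ≤ 1 / (k + 1)} with hskdef
    have hmeas : ∀ k, MeasurableSet (sk k) := by
      intro k
      refine (IsClosed.inter ?_ ?_).measurableSet
      · exact isClosed_le (continuous_finset_sum _ fun i _ => (continuous_apply i).pow 2) continuous_const
      · exact isClosed_le (pmlbF_continuous w).abs continuous_const
    have hanti : Antitone sk := by
      intro k m hkm u hu
      refine ⟨hu.1, hu.2.trans ?_⟩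
      apply one_div_le_one_div_of_le
      · positivity
      · exact_mod_cast add_le_add_left (Nat.cast_le.mpr hkm) 1
    have hfin : ∃ k, volume (sk k) ≠ ⊤ := by
      refine ⟨0, ((measure_mono fun u hu => hu.1).trans_lt
        (lt_of_le_of_ne le_top (pmlb_ball_volume_ne_top d))).ne⟩
    have hiInter : volume (⋂ k, sk k) = 0 := by
      refine measure_mono_null ?_ (hzero _ (pmlb_poly_ne_zero w hwK))
      intro u hu
      simp only [Set.mem_iInter, hskdef, Set.mem_setOf_eq] at hu
      have habs : |pmlbF w u| ≤ 0 := by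
        refine ge_of_tendsto' tendsto_one_div_add_atTop_nhds_zero_nat fun k => (hu k).2
      have : pmlbF w u = 0 := abs_nonpos_iff.mp habs
      rw [Set.mem_setOf_eq, ← pmlbF_eq_eval, this]
    have htend := tendsto_measure_iInter_atTop
      (fun k => (hmeas k).nullMeasurableSet) hanti hfin
    rw [hiInter] at htend
    have hev : ∀ᶠ k in Filter.atTop, volume (sk k) < η :=
      htend.eventually_lt_const hη
    obtain ⟨k, hk⟩ := hev.exists
    refine ⟨1 / (2 * (k + 1)), by positivity, ?_⟩
    have h2t : 2 * (1 / (2 * ((k : ℝ) + 1))) = 1 / (k + 1) := by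
      field_simp
    rw [h2t]
    exact hk
  choose tf htpos htvol using hch
  -- compactness of K
  have hKclosed : IsClosed K :=
    isClosed_eq (continuous_finset_sum _ fun s _ => (continuous_apply s).pow 2)
      continuous_const
  have hKsub : K ⊆ Metric.closedBall 0 1 := by
    intro w hw
    rw [Metric.mem_closedBall, dist_pi_le_iff zero_le_one]
    intro s
    rw [Real.dist_eq, Pi.zero_apply, sub_zero, ← sq_le_one_iff_abs_le_one]
    calc w s ^ 2 ≤ ∑ s', w s' ^ 2 :=
          Finset.single_le_sum (f := fun s' => w s' ^ 2)
            (fun _ _ => sq_nonneg _) (Finset.mem_univ s)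
      _ = 1 := hw
  have hKc : IsCompact K :=
    (isCompact_closedBall (0 : {x // x ∈ pmlbA d p} → ℝ) 1).of_isClosed_subset
      hKclosed hKsub
  set N : ℕ := Fintype.card {x // x ∈ pmlbA d p} with hNdef
  have hN : 0 < N := Fintype.card_pos_iff.mpr ⟨⟨0, pmlbA_zero_mem⟩⟩
  have hcover : K ⊆ ⋃ w : K, Metric.ball w.1 (tf w / N) := by
    intro w hw
    exact Set.mem_iUnion.mpr ⟨⟨w, hw⟩, Metric.mem_ball_self
      (div_pos (htpos _) (by exact_mod_cast hN))⟩
  obtain ⟨I, hI⟩ := hKc.elim_finite_subcover _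
    (fun w : K => Metric.isOpen_ball) hcover
  -- K is nonempty, hence I is nonempty
  have hw₀ : (Pi.single (⟨0, pmlbA_zero_mem⟩ : {x // x ∈ pmlbA d p}) 1 :
      {x // x ∈ pmlbA d p} → ℝ) ∈ K := by
    show (∑ s, _ ^ 2) = 1
    rw [Finset.sum_eq_single (⟨0, pmlbA_zero_mem⟩ : {x // x ∈ pmlbA d p})]
    · simp
    · intro s _ hne; rw [Pi.single_eq_of_ne hne]; ring
    · intro h; exact absurd (Finset.mem_univ _) h
  have hIne : I.Nonempty := by
    obtain ⟨i, hiI, _⟩ := Set.mem_iUnion₂.mp (hI hw₀)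
    exact ⟨i, hiI⟩
  refine ⟨I.inf' hIne tf, ?_, ?_⟩
  · rw [Finset.lt_inf'_iff]
    exact fun i _ => htpos i
  · intro w hw
    obtain ⟨i, hiI, hwi⟩ := Set.mem_iUnion₂.mp (hI hw)
    refine le_of_lt (lt_of_le_of_lt (measure_mono ?_) (htvol i))
    intro u hu
    refine ⟨hu.1, ?_⟩
    have hdist : ∑ s : {x // x ∈ pmlbA d p}, |(i.1 : _ → ℝ) s - w s| ≤ tf i := by
      calc ∑ s : {x // x ∈ pmlbA d p}, |(i.1 : _ → ℝ) s - w s|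
          ≤ ∑ _s : {x // x ∈ pmlbA d p}, tf i / N := by
            refine Finset.sum_le_sum fun s _ => ?_
            rw [← Real.dist_eq]
            exact le_of_lt (lt_of_le_of_lt (dist_le_pi_dist i.1 w s)
              (by rwa [Metric.mem_ball, dist_comm] at hwi))
        _ = tf i := by
            rw [Finset.sum_const, Finset.card_univ, ← hNdef, nsmul_eq_mul]
            field_simp
    calc |pmlbF i.1 u| = |pmlbF w u + (pmlbF i.1 u - pmlbF w u)| := by ring_nf
      _ ≤ |pmlbF w u| + |pmlbF i.1 u - pmlbF w u| := abs_add_le _ _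
      _ ≤ I.inf' hIne tf + tf i :=
          add_le_add (hu.2) ((pmlbF_close i.1 w hu.1).trans hdist)
      _ ≤ tf i + tf i := by
          exact add_le_add_left (Finset.inf'_le _ hiI) _
      _ = 2 * tf i := by ring

lemma pmlb_ball_volume_pos (d : ℕ) (hd : 1 ≤ d) :
    0 < volume {u : Fin d → ℝ | ∑ i, u i ^ 2 ≤ 1} := by
  have hd' : (1 : ℝ) ≤ d := by exact_mod_cast hd
  have hdpos : (0 : ℝ) < d := lt_of_lt_of_le zero_lt_one hd'
  have hsub : Set.pi Set.univ (fun _ : Fin d => Set.Icc (-(1/(d:ℝ))) (1/d)) ⊆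
      {u : Fin d → ℝ | ∑ i, u i ^ 2 ≤ 1} := by
    intro u hu
    have h1 : ∀ i, u i ^ 2 ≤ (1/(d:ℝ))^2 := by
      intro i
      have := hu i (Set.mem_univ i)
      exact sq_le_sq' this.1 this.2
    calc ∑ i, u i ^ 2 ≤ ∑ _i : Fin d, (1/(d:ℝ))^2 := Finset.sum_le_sum fun i _ => h1 i
      _ = d * (1/(d:ℝ))^2 := by rw [Finset.sum_const, Finset.card_univ, Fintype.card_fin,
          nsmul_eq_mul]
      _ = 1/(d:ℝ) := by field_simp
      _ ≤ 1 := by rw [div_le_one hdpos]; exact hd'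
  refine lt_of_lt_of_le ?_ (measure_mono hsub)
  rw [volume_pi_pi]
  simp only [Real.volume_Icc]
  refine pos_iff_ne_zero.mpr (Finset.prod_ne_zero_iff.mpr fun i _ => ?_)
  refine (ENNReal.ofReal_pos.mpr ?_).ne'
  have : (0:ℝ) < 1/(d:ℝ) := by positivity
  linarith

/-- **Uniform lower bound on polynomial mass over subsets of the unit ball.** For every
`d ≥ 1`, `p ∈ ℕ` and `c ∈ (0,1]` there is `μ₀ > 0`, depending only on `d`, `p` and `c`,
such that every polynomial `P` in `d` variables of total degree at most `p` whose
coefficients have sum of squares equal to `1` satisfies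
`∫_S P(u)² du ≥ μ₀` for every measurable `S` contained in the closed Euclidean unit
ball with `λ(S) ≥ c · λ(B)`. -/
theorem polynomial_mass_lower_bound (d p : ℕ) (hd : 1 ≤ d) (c : ℝ)
    (hc0 : 0 < c) (hc1 : c ≤ 1) :
    ∃ μ₀ : ℝ, 0 < μ₀ ∧
      ∀ P : MvPolynomial (Fin d) ℝ, P.totalDegree ≤ p →
        (∑ s ∈ P.support, (MvPolynomial.coeff s P) ^ 2) = 1 →
        ∀ S : Set (Fin d → ℝ), MeasurableSet S →
          S ⊆ {u : Fin d → ℝ | ∑ i, (u i) ^ 2 ≤ 1} →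
          ENNReal.ofReal c * volume {u : Fin d → ℝ | ∑ i, (u i) ^ 2 ≤ 1} ≤ volume S →
          μ₀ ≤ ∫ u in S, (MvPolynomial.eval u P) ^ 2 := by
  classical
  set B : Set (Fin d → ℝ) := {u | ∑ i, u i ^ 2 ≤ 1} with hBdef
  have hBfin : volume B ≠ ⊤ := pmlb_ball_volume_ne_top d
  have hBpos : 0 < volume B := pmlb_ball_volume_pos d hd
  set η : ℝ≥0∞ := ENNReal.ofReal (c/2) * volume B with hηdef
  have hη : 0 < η := ENNReal.mul_pos (ENNReal.ofReal_pos.mpr (by positivity)).ne' hBpos.ne'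
  have hηfin : η ≠ ⊤ := ENNReal.mul_ne_top ENNReal.ofReal_ne_top hBfin
  obtain ⟨t, ht, hkey⟩ := pmlb_key d p (pmlb_zero_set_measure_zero d) η hη
  have hηtR : 0 < η.toReal := ENNReal.toReal_pos hη.ne' hηfin
  refine ⟨t ^ 2 * η.toReal, by positivity, ?_⟩
  intro P hdeg hsum S hSmeas hSsub hSvol
  set w : {x // x ∈ pmlbA d p} → ℝ := fun s => coeff s.1 P with hwdef
  have hsupp : P.support ⊆ pmlbA d p := fun s hs =>
    mem_pmlbA.mpr ((le_totalDegree hs).trans hdeg)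
  have hw1 : (∑ s, w s ^ 2) = 1 := by
    have e1 : (∑ s, w s ^ 2) = ∑ s ∈ pmlbA d p, coeff s P ^ 2 :=
      Finset.sum_coe_sort (pmlbA d p) (fun s => coeff s P ^ 2)
    have e2 : ∑ s ∈ P.support, coeff s P ^ 2 = ∑ s ∈ pmlbA d p, coeff s P ^ 2 :=
      Finset.sum_subset hsupp fun s _ hns => by
        rw [notMem_support_iff.mp hns]; ring
    rw [e1, ← e2]; exact hsum
  have hFeval : ∀ u, pmlbF w u = eval u P := by
    intro u
    rw [eval_eq', Finset.sum_subset hsupp (fun s _ hns => by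
      rw [notMem_support_iff.mp hns]; ring)]
    exact Finset.sum_coe_sort (pmlbA d p) (fun s => coeff s P * ∏ i, u i ^ s i)
  -- bound on the small set
  have hkey' : volume {u : Fin d → ℝ | (∑ i, u i ^ 2 ≤ 1) ∧ |eval u P| ≤ t} ≤ η := by
    have := hkey w hw1
    simpa only [hFeval] using this
  -- the good part of S
  set S' : Set (Fin d → ℝ) := S ∩ {u | t < |eval u P|} with hS'def
  have hS'meas : MeasurableSet S' :=
    hSmeas.inter ((isOpen_lt continuous_const (MvPolynomial.continuous_eval P).abs).measurableSet)
  have hS'subB : S' ⊆ B := fun u hu => hSsub hu.1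
  have hS'fin : volume S' ≠ ⊤ := ((measure_mono hS'subB).trans_lt
    (lt_of_le_of_ne le_top hBfin)).ne
  have hS'low : η ≤ volume S' := by
    have hsplit : volume S ≤ volume S' + η := by
      have hsub2 : S ⊆ S' ∪ {u : Fin d → ℝ | (∑ i, u i ^ 2 ≤ 1) ∧ |eval u P| ≤ t} := by
        intro u hu
        by_cases h : t < |eval u P|
        · exact Or.inl ⟨hu, h⟩
        · exact Or.inr ⟨hSsub hu, not_lt.mp h⟩
      exact (measure_mono hsub2).trans ((measure_union_le _ _).trans
        (add_le_add_right hkey' _))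
    have hcs : η + η ≤ volume S := by
      have : ENNReal.ofReal c = ENNReal.ofReal (c/2) + ENNReal.ofReal (c/2) := by
        rw [← ENNReal.ofReal_add (by positivity) (by positivity)]
        ring_nf
      calc η + η = ENNReal.ofReal c * volume B := by
            rw [hηdef, this, add_mul]
        _ ≤ volume S := hSvol
    have := hcs.trans hsplit
    rwa [ENNReal.add_le_add_iff_right hηfin] at this
  -- integrability
  have hcont2 : Continuous fun u : Fin d → ℝ => eval u P ^ 2 :=
    (MvPolynomial.continuous_eval P).pow 2
  have hbound : ∀ u ∈ B, |eval u P| ≤ (Fintype.card {x // x ∈ pmlbA d p} : ℝ) := by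
    intro u hu
    rw [← hFeval]
    have h0 : pmlbF (fun _ : {x // x ∈ pmlbA d p} => (0:ℝ)) u = 0 := by
      rw [pmlbF]; simp
    calc |pmlbF w u| = |pmlbF w u - pmlbF (fun _ : {x // x ∈ pmlbA d p} => (0:ℝ)) u| := by
          rw [h0, sub_zero]
      _ ≤ ∑ s : {x // x ∈ pmlbA d p}, |w s - 0| :=
          pmlbF_close w (fun _ => (0:ℝ)) hu
      _ ≤ ∑ _s : {x // x ∈ pmlbA d p}, 1 := by
          refine Finset.sum_le_sum fun s _ => ?_
          rw [sub_zero, ← sq_le_one_iff_abs_le_one]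
          calc w s ^ 2 ≤ ∑ s', w s' ^ 2 :=
                Finset.single_le_sum (f := fun s' => w s' ^ 2)
                  (fun _ _ => sq_nonneg _) (Finset.mem_univ s)
            _ = 1 := hw1
      _ = (Fintype.card {x // x ∈ pmlbA d p} : ℝ) := by
          rw [Finset.sum_const, Finset.card_univ, nsmul_eq_mul, mul_one]
  have hint : IntegrableOn (fun u => eval u P ^ 2) S volume := by
    refine Measure.integrableOn_of_bounded
      (M := ((Fintype.card {x // x ∈ pmlbA d p} : ℝ)) ^ 2)
      (((measure_mono hSsub).trans_lt (lt_of_le_of_ne le_top hBfin)).ne)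
      hcont2.aestronglyMeasurable ?_
    refine (ae_restrict_mem hSmeas).mono fun u hu => ?_
    rw [Real.norm_eq_abs, abs_of_nonneg (sq_nonneg _), ← sq_abs]
    have := hbound u (hSsub hu)
    nlinarith [abs_nonneg (eval u P)]
  -- putting it together
  calc t ^ 2 * η.toReal ≤ t ^ 2 * (volume S').toReal := by
        refine mul_le_mul_of_nonneg_left ?_ (sq_nonneg t)
        exact (ENNReal.toReal_le_toReal hηfin hS'fin).mpr hS'low
    _ ≤ ∫ u in S', eval u P ^ 2 := by
        refine setIntegral_ge_of_const_le_real hS'meas hS'fin (fun u hu => ?_)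
          (hint.mono_set Set.inter_subset_left)
        calc t ^ 2 ≤ |eval u P| ^ 2 := pow_le_pow_left₀ ht.le (le_of_lt hu.2) 2
          _ = eval u P ^ 2 := sq_abs _
    _ ≤ ∫ u in S, eval u P ^ 2 := by
        refine setIntegral_mono_set hint ?_ (HasSubset.Subset.eventuallyLE
          Set.inter_subset_left)
        exact Filter.Eventually.of_forall fun u => sq_nonneg _
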